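/- Let U be any unitary operator on ℓ²(ℤ; ℂ²) and x̂(t) = U^{−t} x̂ U^{t} the Heisenberg position operator. Then for every ξ ∈ ℝ, s-lim_{t→∞} exp(iξ x̂(t)/t) Π_p(U) = Π_p(U), where Π_p(U) is the orthogonal projection onto the closed linear span of all eigenvectors of U. -/

import Mathlib

noncomputable section
open MeasureTheory Filter Topology Complex

/-- The Hilbert space `ℓ²(ℤ; ℂ²)` of the quantum walk. -/
abbrev QWH := lp (fun _ : ℤ => EuclideanSpace ℂ (Fin 2)) 2

/-- `M θ` is the unitary multiplication operator `exp(iθx̂)`: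
`(M θ Ψ)(x) = e^{iθx} Ψ(x)`. -/
def IsPosExpFamily (M : ℝ → (QWH →L[ℂ] QWH)) : Prop :=
  ∀ (θ : ℝ) (Ψ : QWH) (x : ℤ) (i : Fin 2),
    (M θ Ψ) x i = Complex.exp (Complex.I * θ * x) * Ψ x i

/-- The closed linear span of all eigenvectors of an operator `U`. -/
def eigSpan {E : Type*} [NormedAddCommGroup E] [InnerProductSpace ℂ E]
    (U : E →L[ℂ] E) : Set E :=
  closure (Submodule.span ℂ {φ : E | φ ≠ 0 ∧ ∃ c : ℂ, U φ = c • φ} : Set E)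

/-- `P` is the orthogonal projection of a Hilbert space onto the set `S`
(which is required to be its fixed-point set). -/
def IsOrthoProjOnto {E : Type*} [NormedAddCommGroup E] [InnerProductSpace ℂ E]
    [CompleteSpace E] (P : E →L[ℂ] E) (S : Set E) : Prop :=
  IsSelfAdjoint P ∧ P.comp P = P ∧ ∀ ψ, (P ψ = ψ ↔ ψ ∈ S)

lemma sq_two_rpow (a : ℝ) (ha : 0 ≤ a) : a ^ (2:ℝ) = a * a := by
  rw [show ((2:ℝ)) = ((2:ℕ):ℝ) by norm_num, Real.rpow_natCast]; ring

lemma tendsto_of_rpow_two {a : ℕ → ℝ} (ha : ∀ t, 0 ≤ a t)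
    (h : Tendsto (fun t => a t ^ (2:ℝ)) atTop (𝓝 0)) : Tendsto a atTop (𝓝 0) := by
  have h2 := (Real.continuous_sqrt.tendsto 0).comp h
  simp only [Function.comp_def, Real.sqrt_zero] at h2
  refine h2.congr fun t => ?_
  rw [show ((2:ℝ)) = ((2:ℕ):ℝ) by norm_num, Real.rpow_natCast, Real.sqrt_sq (ha t)]

lemma M_apply_smul {M : ℝ → (QWH →L[ℂ] QWH)} (hM : IsPosExpFamily M) (θ : ℝ) (Ψ : QWH) (x : ℤ) :
    (M θ Ψ) x = Complex.exp (Complex.I * θ * x) • Ψ x := by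
  ext i
  rw [PiLp.smul_apply, smul_eq_mul]
  exact hM θ Ψ x i

lemma exp_norm_one (θ : ℝ) (x : ℤ) : ‖Complex.exp (Complex.I * θ * x)‖ = 1 := by
  rw [Complex.norm_exp]
  simp [Complex.mul_re]

lemma psi_summable (Ψ : QWH) : Summable (fun x : ℤ => ‖Ψ x‖ ^ (2:ℝ)) := by
  have := (lp.memℓp Ψ).summable (p := 2) (by norm_num)
  simpa using this

lemma M_sub_norm {M : ℝ → (QWH →L[ℂ] QWH)} (hM : IsPosExpFamily M) (θ : ℝ) (Ψ : QWH) :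
    ‖M θ Ψ - Ψ‖ ^ (2:ℝ) = ∑' x : ℤ, (‖Complex.exp (Complex.I * θ * x) - 1‖ * ‖Ψ x‖) ^ (2:ℝ) := by
  have h := lp.norm_rpow_eq_tsum (p := 2) (by norm_num) (M θ Ψ - Ψ)
  simp only [ENNReal.toReal_ofNat] at h
  rw [h]
  apply tsum_congr
  intro x
  congr 1
  have h2 : (M θ Ψ - Ψ) x = (M θ Ψ) x - Ψ x := by
    rw [lp.coeFn_sub (M θ Ψ) Ψ]; rfl
  rw [h2, M_apply_smul hM]
  rw [show Complex.exp (Complex.I * θ * x) • Ψ x - Ψ x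
      = (Complex.exp (Complex.I * θ * x) - 1) • Ψ x by rw [sub_smul, one_smul]]
  rw [norm_smul]

lemma M_tendsto {M : ℝ → (QWH →L[ℂ] QWH)} (hM : IsPosExpFamily M) (ξ : ℝ) (Ψ : QWH) :
    Tendsto (fun t : ℕ => M (ξ / t) Ψ) atTop (𝓝 Ψ) := by
  rw [tendsto_iff_norm_sub_tendsto_zero]
  apply tendsto_of_rpow_two (fun t => norm_nonneg _)
  simp only [M_sub_norm hM]
  have h0 : (0:ℝ) = ∑' x : ℤ, (0:ℝ) := by simp
  rw [h0]
  apply tendsto_tsum_of_dominated_convergence (bound := fun x : ℤ => 4 * ‖Ψ x‖ ^ (2:ℝ))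
  · exact (psi_summable Ψ).mul_left 4
  · intro x
    have hθ : Tendsto (fun t : ℕ => (ξ / t : ℝ)) atTop (𝓝 0) :=
      tendsto_const_div_atTop_nhds_zero_nat ξ
    have hexp : Tendsto (fun t : ℕ => Complex.exp (Complex.I * (ξ / t : ℝ) * x)) atTop
        (𝓝 1) := by
      have h1 : Tendsto (fun t : ℕ => (Complex.I * (ξ / t : ℝ) * x : ℂ)) atTop (𝓝 0) := by
        have := (Complex.continuous_ofReal.tendsto 0).comp hθ
        have h2 := (this.const_mul Complex.I).mul_const (x:ℂ)
        simpa using h2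
      simpa [Function.comp_def] using (Complex.continuous_exp.tendsto 0).comp h1
    have h3 : Tendsto (fun t : ℕ => ‖Complex.exp (Complex.I * (ξ / t : ℝ) * x) - 1‖) atTop
        (𝓝 0) := by
      have := hexp.sub (tendsto_const_nhds : Tendsto (fun _ : ℕ => (1:ℂ)) atTop (𝓝 1))
      simpa using this.norm
    have := (h3.mul_const ‖Ψ x‖).rpow_const (p := (2:ℝ)) (Or.inr (by norm_num))
    simpa using this
  · filter_upwards with t
    intro x
    rw [Real.norm_of_nonneg (by positivity)]
    have hb : ‖Complex.exp (Complex.I * (ξ / t : ℝ) * x) - 1‖ * ‖Ψ x‖ ≤ 2 * ‖Ψ x‖ := by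
      apply mul_le_mul_of_nonneg_right _ (norm_nonneg _)
      calc ‖Complex.exp (Complex.I * (ξ / t : ℝ) * x) - 1‖
          ≤ ‖Complex.exp (Complex.I * (ξ / t : ℝ) * x)‖ + ‖(1:ℂ)‖ := norm_sub_le _ _
        _ = 2 := by rw [exp_norm_one]; norm_num
    calc (‖Complex.exp (Complex.I * (ξ / t : ℝ) * x) - 1‖ * ‖Ψ x‖) ^ (2:ℝ)
        ≤ (2 * ‖Ψ x‖) ^ (2:ℝ) := Real.rpow_le_rpow (by positivity) hb (by norm_num)
      _ = 4 * ‖Ψ x‖ ^ (2:ℝ) := by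
          rw [sq_two_rpow _ (by positivity), sq_two_rpow _ (norm_nonneg _)]; ring

lemma M_norm_eq {M : ℝ → (QWH →L[ℂ] QWH)} (hM : IsPosExpFamily M) (θ : ℝ) (Ψ : QWH) :
    ‖M θ Ψ‖ = ‖Ψ‖ := by
  rw [lp.norm_eq_tsum_rpow (by norm_num) (M θ Ψ), lp.norm_eq_tsum_rpow (by norm_num) Ψ]
  congr 1
  apply tsum_congr
  intro x
  rw [M_apply_smul hM, norm_smul, exp_norm_one, one_mul]

set_option maxHeartbeats 1000000 in
/-- Theorem 4.2: for any unitary `U` on `ℓ²(ℤ;ℂ²)` and every `ξ ∈ ℝ`,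
`s-lim exp(iξ x̂(t)/t) Π_p(U) = Π_p(U)`. -/
theorem exp_velocity_on_point_spectrum
    (U : unitary (QWH →L[ℂ] QWH))
    (Pp : QWH →L[ℂ] QWH) (hPp : IsOrthoProjOnto Pp (eigSpan (U : QWH →L[ℂ] QWH)))
    (Mexp : ℝ → QWH →L[ℂ] QWH) (hM : IsPosExpFamily Mexp) :
    ∀ (ξ : ℝ) (ψ : QWH), Tendsto
      (fun t : ℕ => ((((U ^ t)⁻¹) : unitary (QWH →L[ℂ] QWH)) : QWH →L[ℂ] QWH) (Mexp (ξ / t) ((((U ^ t) : unitary (QWH →L[ℂ] QWH)) : QWH →L[ℂ] QWH) (Pp ψ))))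
      atTop (𝓝 (Pp ψ)) := by
  intro ξ ψ
  -- notation
  set V : ℕ → QWH → QWH := fun t f =>
    ((((U ^ t)⁻¹) : unitary (QWH →L[ℂ] QWH)) : QWH →L[ℂ] QWH)
      (Mexp (ξ / t) ((((U ^ t) : unitary (QWH →L[ℂ] QWH)) : QWH →L[ℂ] QWH) f)) with hV
  -- basic facts
  have hinv : ∀ (t : ℕ) (f : QWH),
      ((((U ^ t)⁻¹) : unitary (QWH →L[ℂ] QWH)) : QWH →L[ℂ] QWH)
        ((((U ^ t) : unitary (QWH →L[ℂ] QWH)) : QWH →L[ℂ] QWH) f) = f := by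
    intro t f
    have h1 : ((((U ^ t)⁻¹) : unitary (QWH →L[ℂ] QWH)) : QWH →L[ℂ] QWH) *
        (((U ^ t) : unitary (QWH →L[ℂ] QWH)) : QWH →L[ℂ] QWH) = 1 := by
      rw [← Submonoid.coe_mul, inv_mul_cancel]; rfl
    calc ((((U ^ t)⁻¹) : unitary (QWH →L[ℂ] QWH)) : QWH →L[ℂ] QWH)
          ((((U ^ t) : unitary (QWH →L[ℂ] QWH)) : QWH →L[ℂ] QWH) f)
        = (((((U ^ t)⁻¹) : unitary (QWH →L[ℂ] QWH)) : QWH →L[ℂ] QWH) *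
          (((U ^ t) : unitary (QWH →L[ℂ] QWH)) : QWH →L[ℂ] QWH)) f := rfl
      _ = f := by rw [h1]; rfl
  have hVnorm : ∀ (t : ℕ) (f : QWH), ‖V t f‖ = ‖f‖ := by
    intro t f
    rw [hV]
    simp only
    rw [Unitary.norm_map, M_norm_eq hM, Unitary.norm_map]
  have hVlin : ∀ t, IsLinearMap ℂ (V t) := by
    intro t
    constructor
    · intro f g; simp only [hV, map_add]
    · intro c f; simp only [hV, _root_.map_smul]
  -- the set of good vectors
  set S : Set QWH := {f | Tendsto (fun t : ℕ => V t f) atTop (𝓝 f)} with hS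
  -- eigenvectors are good
  have heig : ∀ φ : QWH, φ ≠ 0 → ∀ c : ℂ, (U : QWH →L[ℂ] QWH) φ = c • φ → φ ∈ S := by
    intro φ hφ c hc
    have hcnorm : ‖c‖ = 1 := by
      have h1 : ‖(U : QWH →L[ℂ] QWH) φ‖ = ‖φ‖ := Unitary.norm_map U φ
      rw [hc, norm_smul] at h1
      have : ‖φ‖ ≠ 0 := norm_ne_zero_iff.mpr hφ
      field_simp at h1
      tauto
    have hcoe : ∀ t : ℕ, ((U ^ t : unitary (QWH →L[ℂ] QWH)) : QWH →L[ℂ] QWH)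
        = ((U : QWH →L[ℂ] QWH)) ^ t := fun t => SubmonoidClass.coe_pow U t
    have hpow0 : ∀ t : ℕ, ((U : QWH →L[ℂ] QWH) ^ t) φ = c ^ t • φ := by
      intro t
      induction t with
      | zero => rw [pow_zero, pow_zero, one_smul, ContinuousLinearMap.one_apply]
      | succ n ih =>
        rw [pow_succ', pow_succ', ContinuousLinearMap.mul_apply, ih,
          ContinuousLinearMap.map_smul, hc, smul_smul, mul_comm]
    have hpow : ∀ t : ℕ, (((U ^ t : unitary (QWH →L[ℂ] QWH)) : QWH →L[ℂ] QWH)) φ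
        = c ^ t • φ := fun t => by rw [hcoe, hpow0]
    rw [hS]
    show Tendsto (fun t : ℕ => V t φ) atTop (𝓝 φ)
    rw [tendsto_iff_norm_sub_tendsto_zero]
    have hkey : ∀ t : ℕ, ‖V t φ - φ‖ = ‖Mexp (ξ / t) φ - φ‖ := by
      intro t
      have e1 : V t φ - φ = c ^ t •
          ((((U ^ t)⁻¹ : unitary (QWH →L[ℂ] QWH)) : QWH →L[ℂ] QWH) (Mexp (ξ / t) φ - φ)) := by
        have e2 : V t φ = c ^ t •
            ((((U ^ t)⁻¹ : unitary (QWH →L[ℂ] QWH)) : QWH →L[ℂ] QWH) (Mexp (ξ / t) φ)) := by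
          rw [hV]
          simp only [hpow]
          rw [ContinuousLinearMap.map_smul, ContinuousLinearMap.map_smul]
        have e3 : φ = c ^ t •
            ((((U ^ t)⁻¹ : unitary (QWH →L[ℂ] QWH)) : QWH →L[ℂ] QWH) φ) := by
          conv_lhs => rw [← hinv t φ, hpow]
          rw [ContinuousLinearMap.map_smul]
        rw [e2]
        nth_rewrite 2 [e3]
        rw [← smul_sub, ← map_sub]
      rw [e1, norm_smul, norm_pow, hcnorm, one_pow, one_mul, Unitary.norm_map]
    simp only [hkey]
    rw [← tendsto_iff_norm_sub_tendsto_zero]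
    exact M_tendsto hM ξ φ
  -- span is good
  have hspan : (Submodule.span ℂ {φ : QWH | φ ≠ 0 ∧ ∃ c : ℂ, (U : QWH →L[ℂ] QWH) φ = c • φ} :
      Set QWH) ⊆ S := by
    intro f hf
    induction hf using Submodule.span_induction with
    | mem x hx => exact heig x hx.1 hx.2.choose hx.2.choose_spec
    | zero =>
      show Tendsto (fun t : ℕ => V t 0) atTop (𝓝 0)
      have : ∀ t : ℕ, V t (0 : QWH) = 0 := fun t => by
        simpa using (hVlin t).map_smul 0 0
      simpa only [this] using (tendsto_const_nhds : Tendsto (fun _ : ℕ => (0:QWH)) atTop (𝓝 0))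
    | add x y hx hy hx' hy' =>
      have := Tendsto.add hx' hy'
      show Tendsto (fun t : ℕ => V t (x + y)) atTop (𝓝 (x + y))
      simpa only [← (hVlin _).map_add] using this
    | smul c x hx hx' =>
      have := Tendsto.const_smul hx' c
      show Tendsto (fun t : ℕ => V t (c • x)) atTop (𝓝 (c • x))
      simpa only [← (hVlin _).map_smul] using this
  -- closure is good
  have hclos : eigSpan (U : QWH →L[ℂ] QWH) ⊆ S := by
    intro f hf
    show Tendsto (fun t : ℕ => V t f) atTop (𝓝 f)
    rw [Metric.tendsto_atTop]
    intro ε hε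
    obtain ⟨g, hgS, hgd⟩ := Metric.mem_closure_iff.mp hf (ε / 3) (by linarith)
    have hg := hspan hgS
    have hg2 : Tendsto (fun t : ℕ => V t g) atTop (𝓝 g) := hg
    rw [Metric.tendsto_atTop] at hg2
    obtain ⟨N, hN⟩ := hg2 (ε / 3) (by linarith)
    refine ⟨N, fun t ht => ?_⟩
    have h1 : dist (V t f) (V t g) = dist f g := by
      rw [dist_eq_norm, dist_eq_norm, ← (hVlin t).map_sub f g, hVnorm]
    calc dist (V t f) f ≤ dist (V t f) (V t g) + dist (V t g) g + dist g f := dist_triangle4 _ _ _ _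
      _ < ε / 3 + ε / 3 + ε / 3 := by
          apply add_lt_add (add_lt_add _ (hN t ht)) _
          · rw [h1]; exact hgd
          · rw [dist_comm]; exact hgd
      _ = ε := by ring
  -- conclude
  have hfix : Pp (Pp ψ) = Pp ψ := by
    have := congrArg (fun T => T ψ) hPp.2.1
    exact this
  have hmem : Pp ψ ∈ eigSpan (U : QWH →L[ℂ] QWH) := (hPp.2.2 (Pp ψ)).mp hfix
  exact hclos hmem
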